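/- The automorphism group of the alternating group A₄ is isomorphic to the symmetric group S₄. -/
import Mathlib

private def xp : Equiv.Perm (Fin 4) := Equiv.swap 0 1 * Equiv.swap 1 2
private def yp : Equiv.Perm (Fin 4) := Equiv.swap 0 1 * Equiv.swap 1 3

private instance instDecA4 : DecidablePred (· ∈ alternatingGroup (Fin 4)) := fun p =>
  decidable_of_iff _ (Equiv.Perm.mem_alternatingGroup (f := p)).symm

private lemma xp_mem : xp ∈ alternatingGroup (Fin 4) := by decide
private lemma yp_mem : yp ∈ alternatingGroup (Fin 4) := by decide

private lemma centr :
    ∀ g : Equiv.Perm (Fin 4),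
      (∀ h : Equiv.Perm (Fin 4), h ∈ alternatingGroup (Fin 4) → g * h * g⁻¹ = h) → g = 1 := by
  decide

private lemma cover :
    ∀ z : Equiv.Perm (Fin 4), z ∈ alternatingGroup (Fin 4) →
      z ∈ [(1 : Equiv.Perm (Fin 4)), xp, yp, xp * xp, xp * yp, yp * xp, yp * yp,
        xp * xp * yp, xp * yp * yp, yp * xp * xp, yp * yp * xp, yp * xp * xp * yp] := by
  decide

set_option synthInstance.maxSize 1000 in
set_option maxRecDepth 10000 in
private lemma exists_conj :
    ∀ a b : Equiv.Perm (Fin 4),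
      a ^ 3 = 1 → b ^ 3 = 1 → (a * b) ^ 2 = 1 → a ≠ 1 → b ≠ 1 → a * b ≠ 1 →
      ∃ g : Equiv.Perm (Fin 4), g * xp * g⁻¹ = a ∧ g * yp * g⁻¹ = b := by
  decide

/-- The automorphism group of the alternating group `A₄` is isomorphic to the
symmetric group `S₄`. -/
theorem aut_alternating_four_iso_perm_four :
    Nonempty (MulAut (alternatingGroup (Fin 4)) ≃* Equiv.Perm (Fin 4)) := by
  set A := alternatingGroup (Fin 4)
  set x : A := ⟨xp, xp_mem⟩
  set y : A := ⟨yp, yp_mem⟩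
  set f : Equiv.Perm (Fin 4) →* MulAut A := MulAut.conjNormal
  have hinj : Function.Injective f := by
    rw [injective_iff_map_eq_one]
    intro g hg
    apply centr
    intro h hh
    have := congrArg Subtype.val (DFunLike.congr_fun (congrArg MulEquiv.toEquiv hg) ⟨h, hh⟩)
    simpa [f, MulAut.conjNormal_apply] using this
  have hsurj : Function.Surjective f := by
    intro φ
    have hx3 : x ^ 3 = 1 := Subtype.ext (by decide)
    have hy3 : y ^ 3 = 1 := Subtype.ext (by decide)
    have hxy2 : (x * y) ^ 2 = 1 := Subtype.ext (by decide)
    have ha3 : ((φ x : A) : Equiv.Perm (Fin 4)) ^ 3 = 1 := by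
      have : φ x ^ 3 = 1 := by rw [← map_pow, hx3, map_one]
      exact_mod_cast congrArg Subtype.val this
    have hb3 : ((φ y : A) : Equiv.Perm (Fin 4)) ^ 3 = 1 := by
      have : φ y ^ 3 = 1 := by rw [← map_pow, hy3, map_one]
      exact_mod_cast congrArg Subtype.val this
    have hab2 : (((φ x : A) : Equiv.Perm (Fin 4)) * (φ y : A)) ^ 2 = 1 := by
      have : (φ x * φ y) ^ 2 = 1 := by rw [← map_mul, ← map_pow, hxy2, map_one]
      exact_mod_cast congrArg Subtype.val this
    have hane : ((φ x : A) : Equiv.Perm (Fin 4)) ≠ 1 := by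
      intro h
      have hx1 : φ x = 1 := Subtype.ext h
      have : x = 1 := by simpa using congrArg φ.symm hx1
      have : xp = 1 := congrArg Subtype.val this
      exact absurd this (by decide)
    have hbne : ((φ y : A) : Equiv.Perm (Fin 4)) ≠ 1 := by
      intro h
      have hy1 : φ y = 1 := Subtype.ext h
      have : y = 1 := by simpa using congrArg φ.symm hy1
      have : yp = 1 := congrArg Subtype.val this
      exact absurd this (by decide)
    have habne : ((φ x : A) : Equiv.Perm (Fin 4)) * (φ y : A) ≠ 1 := by
      intro h
      have hxy1 : φ (x * y) = 1 := by
        rw [map_mul]; exact Subtype.ext h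
      have : x * y = 1 := by simpa using congrArg φ.symm hxy1
      have : xp * yp = 1 := congrArg Subtype.val this
      exact absurd this (by decide)
    obtain ⟨g, hgx, hgy⟩ := exists_conj _ _ ha3 hb3 hab2 hane hbne habne
    refine ⟨g, ?_⟩
    have h1 : f g x = φ x := Subtype.ext (by rw [MulAut.conjNormal_apply]; exact hgx)
    have h2 : f g y = φ y := Subtype.ext (by rw [MulAut.conjNormal_apply]; exact hgy)
    apply MulEquiv.ext
    intro z
    have hz := cover (z : Equiv.Perm (Fin 4)) z.2
    simp only [List.mem_cons, List.not_mem_nil, or_false] at hz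
    rcases hz with h | h | h | h | h | h | h | h | h | h | h | h
    · have : z = 1 := Subtype.ext h
      rw [this, map_one, map_one]
    · have : z = x := Subtype.ext h
      rw [this, h1]
    · have : z = y := Subtype.ext h
      rw [this, h2]
    · have : z = x * x := Subtype.ext h
      rw [this, map_mul, map_mul, h1]
    · have : z = x * y := Subtype.ext h
      rw [this, map_mul, map_mul, h1, h2]
    · have : z = y * x := Subtype.ext h
      rw [this, map_mul, map_mul, h1, h2]
    · have : z = y * y := Subtype.ext h
      rw [this, map_mul, map_mul, h2]
    · have : z = x * x * y := Subtype.ext h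
      rw [this, map_mul, map_mul, map_mul, map_mul, h1, h2]
    · have : z = x * y * y := Subtype.ext h
      rw [this, map_mul, map_mul, map_mul, map_mul, h1, h2]
    · have : z = y * x * x := Subtype.ext h
      rw [this, map_mul, map_mul, map_mul, map_mul, h1, h2]
    · have : z = y * y * x := Subtype.ext h
      rw [this, map_mul, map_mul, map_mul, map_mul, h1, h2]
    · have : z = y * x * x * y := Subtype.ext h
      rw [this, map_mul, map_mul, map_mul, map_mul, map_mul, map_mul, h1, h2]
  exact ⟨(MulEquiv.ofBijective f ⟨hinj, hsurj⟩).symm⟩
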